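/- For all real x > 0, 6·(x·tanh x − log(cosh x)) − 3x²·sech²(x) − 2x³·tanh(x)·sech²(x) ≤ x⁵/6. (Equivalently, the third derivative of I(x) = log(cosh x)/x satisfies I'''(x) ≤ x/6 for x > 0, since I'''(x) = [6(x·tanh x − log(cosh x)) − 3x²·sech²x − 2x³·tanh x·sech²x]/x⁴.) -/

import Mathlib

open Real

lemma cosh_le_poly {t : ℝ} (h0 : 0 ≤ t) (h1 : t ≤ 4/5) :
    Real.cosh t ≤ 1 + t^2/2 + t^4/23 := by
  have ht1 : |t| ≤ 1 := by rw [abs_of_nonneg h0]; linarith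
  have ht1' : |(-t)| ≤ 1 := by rwa [abs_neg]
  have hb := Real.exp_bound ht1 (by norm_num : 0 < 6)
  have hb' := Real.exp_bound ht1' (by norm_num : 0 < 6)
  rw [abs_sub_le_iff] at hb hb'
  have h2 := hb.1
  have h2' := hb'.1
  simp only [Finset.sum_range_succ, Finset.sum_range_zero] at h2 h2'
  norm_num [Nat.factorial] at h2 h2'
  rw [abs_of_nonneg h0] at h2 h2'
  have hc : Real.cosh t = (Real.exp t + Real.exp (-t)) / 2 := Real.cosh_eq t
  rw [hc]
  have h64 : t^2 ≤ 16/25 := by nlinarith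
  ring_nf at h2 h2' ⊢
  nlinarith [pow_nonneg h0 4, mul_nonneg (pow_nonneg h0 4) (by linarith : (0:ℝ) ≤ 16/25 - t^2)]

lemma key_aux {t c : ℝ} (h0 : 0 ≤ t) (h1 : t ≤ 4/5) (hc0 : 0 ≤ c) (hc1 : 1 ≤ c)
    (hB : c ≤ 1 + t^2/2 + t^4/23) : 24 * c ^ 2 - 36 ≤ 5 * t * c ^ 4 := by
  have ht2 : t^2 ≤ 16/25 := by nlinarith
  have ht4 : t^4 ≤ 256/625 := by nlinarith
  have hB2 : c^2 ≤ (1 + t^2/2 + t^4/23)^2 := pow_le_pow_left₀ hc0 hB 2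
  have hyU : c^2 ≤ 1 + t^2 + (2/5)*t^4 := by
    refine hB2.trans ?_
    nlinarith [pow_nonneg h0 4, pow_nonneg h0 6, pow_nonneg h0 8,
      mul_nonneg (pow_nonneg h0 4) (by linarith : (0:ℝ) ≤ 16/25 - t^2),
      mul_nonneg (pow_nonneg h0 6) (by linarith : (0:ℝ) ≤ 16/25 - t^2)]
  have key1 : 0 ≤ 5*t*(1 + t^2 + (2/5)*t^4)^2 - 24*(1 + t^2 + (2/5)*t^4) + 36 := by
    nlinarith [pow_nonneg h0 2, pow_nonneg h0 3, pow_nonneg h0 4, pow_nonneg h0 5,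
      mul_nonneg (pow_nonneg h0 2) (by linarith : (0:ℝ) ≤ 4/5 - t),
      mul_nonneg (pow_nonneg h0 4) (by linarith : (0:ℝ) ≤ 4/5 - t),
      mul_nonneg (pow_nonneg h0 6) (by linarith : (0:ℝ) ≤ 4/5 - t),
      mul_nonneg (pow_nonneg h0 8) (by linarith : (0:ℝ) ≤ 4/5 - t)]
  have hcU : (0:ℝ) ≤ c^2 + (1 + t^2 + (2/5)*t^4) := by positivity
  have key2 : 0 ≤ 24 - 5*t*(c^2 + (1 + t^2 + (2/5)*t^4)) := by
    nlinarith [mul_nonneg (by linarith : (0:ℝ) ≤ 4 - 5*t) hcU]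
  nlinarith [mul_nonneg (by linarith : (0:ℝ) ≤ (1 + t^2 + (2/5)*t^4) - c^2) key2]

lemma key_ineq {t : ℝ} (h0 : 0 ≤ t) :
    24 * Real.cosh t ^ 2 - 36 ≤ 5 * t * Real.cosh t ^ 4 := by
  rcases le_or_gt t (4/5) with h1 | h1
  · exact key_aux h0 h1 (Real.cosh_pos t).le (Real.one_le_cosh t) (cosh_le_poly h0 h1)
  · have hc1 : 1 ≤ Real.cosh t := Real.one_le_cosh t
    nlinarith [sq_nonneg (Real.cosh t ^ 2 - 3),
      mul_nonneg (by linarith : (0:ℝ) ≤ 5*t - 4) (pow_nonneg (Real.cosh_pos t).le 4)]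

noncomputable def Faux (t : ℝ) : ℝ :=
  t^5/6 - (6*(t*Real.sinh t/Real.cosh t - Real.log (Real.cosh t))
    - 3*t^2*(1/Real.cosh t)^2 - 2*t^3*(Real.sinh t/Real.cosh t)*(1/Real.cosh t)^2)

noncomputable def Faux' (t : ℝ) : ℝ :=
  5*t^4/6 - (4*t^3*Real.sinh t^2 - 2*t^3)/Real.cosh t^4

lemma hasDeriv_Faux (t : ℝ) : HasDerivAt Faux (Faux' t) t := by
  have hc : Real.cosh t ≠ 0 := (Real.cosh_pos t).ne'
  have hs := Real.hasDerivAt_sinh t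
  have hch := Real.hasDerivAt_cosh t
  have hA : HasDerivAt (fun t => t * Real.sinh t / Real.cosh t)
      (((1 * Real.sinh t + t * Real.cosh t) * Real.cosh t - t * Real.sinh t * Real.sinh t)
        / Real.cosh t ^ 2) t := ((hasDerivAt_id t).mul hs).div hch hc
  have hL : HasDerivAt (fun t => Real.log (Real.cosh t)) (Real.sinh t / Real.cosh t) t :=
    hch.log hc
  have hInv : HasDerivAt (fun t => 1 / Real.cosh t)
      ((0 * Real.cosh t - 1 * Real.sinh t) / Real.cosh t ^ 2) t :=
    (hasDerivAt_const t (1:ℝ)).div hch hc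
  have hSq := hInv.pow 2
  have hT : HasDerivAt (fun t => Real.sinh t / Real.cosh t)
      ((Real.cosh t * Real.cosh t - Real.sinh t * Real.sinh t) / Real.cosh t ^ 2) t :=
    hs.div hch hc
  have h2 := (hasDerivAt_pow 2 t).mul hSq
  have h3 := (hasDerivAt_pow 3 t).mul (hT.mul hSq)
  have h5 := (hasDerivAt_pow 5 t).div_const 6
  have hall := h5.sub ((((hA.sub hL).const_mul 6).sub (h2.const_mul 3)).sub (h3.const_mul 2))
  convert hall using 1
  rotate_left 2
  · ext u; simp [Faux]; ring
  · have hc2 : Real.cosh t ^ 2 ≠ 0 := pow_ne_zero _ hc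
    simp only [Faux', Pi.pow_apply, Pi.mul_apply]
    norm_num
    field_simp
    rw [Real.sinh_sq]
    ring
  · rfl
  · rfl

lemma Faux'_nonneg {t : ℝ} (h0 : 0 ≤ t) : 0 ≤ Faux' t := by
  have key := key_ineq h0
  have hc4 : (0:ℝ) < Real.cosh t ^ 4 := by positivity
  have hs := Real.sinh_sq t
  rw [Faux', sub_nonneg, div_le_iff₀ hc4, hs]
  nlinarith [mul_le_mul_of_nonneg_left key (pow_nonneg h0 3)]

theorem third_deriv_ineq (x : ℝ) (hx : 0 < x) :
    6 * (x * Real.tanh x - Real.log (Real.cosh x)) -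
        3 * x ^ 2 * (1 / Real.cosh x) ^ 2 -
        2 * x ^ 3 * Real.tanh x * (1 / Real.cosh x) ^ 2 ≤ x ^ 5 / 6 := by
  have hmono : MonotoneOn Faux (Set.Icc 0 x) := by
    apply monotoneOn_of_deriv_nonneg (convex_Icc 0 x)
    · exact fun t _ => (hasDeriv_Faux t).differentiableAt.continuousAt.continuousWithinAt
    · exact fun t _ => (hasDeriv_Faux t).differentiableAt.differentiableWithinAt
    · intro t ht
      rw [interior_Icc] at ht
      rw [(hasDeriv_Faux t).deriv]
      exact Faux'_nonneg ht.1.le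
  have h01 : (0:ℝ) ∈ Set.Icc 0 x := ⟨le_refl 0, hx.le⟩
  have h02 : x ∈ Set.Icc (0:ℝ) x := ⟨hx.le, le_refl x⟩
  have hF0 : Faux 0 = 0 := by simp [Faux]
  have hFx := hmono h01 h02 hx.le
  rw [hF0] at hFx
  rw [Real.tanh_eq_sinh_div_cosh]
  simp only [Faux] at hFx
  ring_nf at hFx ⊢
  linarith
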